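/- Fix a real number α > −1 and let A(x) = Σ_{m=0}^∞ (−x)^m/(m! Γ(α+1+m)) (an entire function of x; one has x^{α/2} A(x) = J_α(2√x) in terms of the classical Bessel function). Then for all x, y > 0 with x ≠ y, the limit kernel at θ = 1 satisfies 𝒦^{(α,1)}(x,y) = [y · A(x) A'(y) − x · A(y) A'(x)] / (x − y); i.e., (xy)^{α/2} 𝒦^{(α,1)}(x,y) is the classical Bessel kernel. -/

import Mathlib

/-- The limit kernel `𝒦^{(α,θ)}(x,y)` of the biorthogonal Jacobi/Laguerre ensembles. -/
noncomputable def limitKernel (α θ x y : ℝ) : ℝ :=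
  ∑' k : ℕ, ∑' l : ℕ,
    ((-1) ^ k * x ^ k / ((Nat.factorial k : ℝ) * Real.Gamma ((α + 1 + k) / θ))) *
      ((-1) ^ l * y ^ (θ * (l : ℝ)) /
        ((Nat.factorial l : ℝ) * Real.Gamma (α + 1 + θ * l))) *
      (θ / (α + 1 + k + θ * l))

/-- The entire function `A(x) = ∑ (-x)^m / (m! Γ(α + 1 + m))`, so that
`x^{α/2} A(x) = J_α(2√x)`. -/
noncomputable def besselA (α : ℝ) (x : ℝ) : ℝ :=
  ∑' m : ℕ, (-x) ^ m / ((Nat.factorial m : ℝ) * Real.Gamma (α + 1 + m))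


open Real

section Aux
variable {α : ℝ}

lemma arg_pos (hα : -1 < α) (m : ℕ) : 0 < α + 1 + m := by
  have : (0:ℝ) ≤ m := Nat.cast_nonneg m
  linarith

lemma gamma_pos (hα : -1 < α) (m : ℕ) : 0 < Real.Gamma (α + 1 + m) :=
  Real.Gamma_pos_of_pos (arg_pos hα m)

lemma gamma_rec (hα : -1 < α) (m : ℕ) :
    Real.Gamma (α + 1 + ((m : ℝ) + 1)) = (α + 1 + m) * Real.Gamma (α + 1 + m) := by
  have h : α + 1 + ((m : ℝ) + 1) = (α + 1 + m) + 1 := by ring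
  rw [h, Real.Gamma_add_one (ne_of_gt (arg_pos hα m))]

lemma inv_gamma_bound (hα : -1 < α) :
    ∃ C : ℝ, 0 < C ∧ ∀ m : ℕ, 1 / Real.Gamma (α + 1 + m) ≤ C := by
  refine ⟨max (max (1 / Real.Gamma (α + 1 + (0:ℕ))) (1 / Real.Gamma (α + 1 + (1:ℕ)))) 1,
    lt_of_lt_of_le one_pos (le_max_right _ _), fun m => ?_⟩
  match m with
  | 0 => exact le_max_of_le_left (le_max_left _ _)
  | 1 => exact le_max_of_le_left (le_max_right _ _)
  | (n+2) =>
    have h2 : (2:ℝ) ≤ α + 1 + ((n+2 : ℕ) : ℝ) := by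
      push_cast
      have : (0:ℝ) ≤ n := Nat.cast_nonneg n
      linarith
    have hmono := Real.Gamma_strictMonoOn_Ici.monotoneOn (by norm_num : (2:ℝ) ∈ Set.Ici 2)
      (by exact h2) h2
    rw [Real.Gamma_two] at hmono
    refine le_trans ?_ (le_max_right _ _)
    rw [div_le_one (gamma_pos hα (n+2))]
    exact hmono

lemma key_summable (hα : -1 < α) {R : ℝ} (hR : 0 ≤ R) :
    Summable (fun m : ℕ => ((m : ℝ) + 1) * R ^ m / (m.factorial * Real.Gamma (α + 1 + m))) := by
  obtain ⟨C, hC, hCb⟩ := inv_gamma_bound hα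
  refine Summable.of_nonneg_of_le (fun m => ?_) (fun m => ?_)
    (((Real.summable_pow_div_factorial (2*R)).mul_left C))
  · have h1 := gamma_pos hα m
    have h2 : (0:ℝ) < m.factorial := by positivity
    positivity
  · have h1 : ((m:ℝ)+1) ≤ 2 ^ m := by
      have := Nat.lt_two_pow_self (n := m)
      exact_mod_cast this
    have hΓ := gamma_pos hα m
    have hf : (0:ℝ) < m.factorial := by positivity
    calc ((m:ℝ)+1) * R ^ m / (m.factorial * Real.Gamma (α+1+m))
        = (((m:ℝ)+1) * R ^ m / m.factorial) * (1 / Real.Gamma (α+1+m)) := by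
          rw [div_mul_eq_div_div, div_eq_mul_one_div]
      _ ≤ ((2:ℝ)^m * R ^ m / m.factorial) * C := by
          apply mul_le_mul _ (hCb m) (by positivity) (by positivity)
          gcongr
      _ = C * ((2*R) ^ m / m.factorial) := by rw [mul_pow]; ring

end Aux

section Aux2
variable {α : ℝ}

/-- coefficient `a_m(z) = (-z)^m / (m! Γ(α+1+m))` -/
noncomputable def aa (α z : ℝ) (m : ℕ) : ℝ :=
  (-z) ^ m / (m.factorial * Real.Gamma (α + 1 + m))

lemma abs_aa (hα : -1 < α) (z : ℝ) (m : ℕ) :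
    |aa α z m| = |z| ^ m / (m.factorial * Real.Gamma (α + 1 + m)) := by
  have h1 := gamma_pos hα m
  have h2 : (0:ℝ) < m.factorial := by positivity
  rw [aa, abs_div, abs_pow, abs_neg, abs_of_pos (mul_pos h2 h1)]

lemma summable_wt (hα : -1 < α) (z : ℝ) :
    Summable (fun m : ℕ => ((m : ℝ) + 1) * |aa α z m|) := by
  have := key_summable hα (abs_nonneg z)
  refine this.congr fun m => ?_
  rw [abs_aa hα, mul_div_assoc]

lemma summable_abs_aa (hα : -1 < α) (z : ℝ) : Summable (fun m : ℕ => |aa α z m|) := by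
  refine Summable.of_nonneg_of_le (fun m => abs_nonneg _) (fun m => ?_) (summable_wt hα z)
  nlinarith [abs_nonneg (aa α z m), Nat.cast_nonneg (α := ℝ) m]

lemma summable_aa (hα : -1 < α) (z : ℝ) : Summable (aa α z) :=
  (summable_abs_aa hα z).of_abs

lemma summable_mul_abs_aa (hα : -1 < α) (z : ℝ) :
    Summable (fun m : ℕ => (m : ℝ) * |aa α z m|) := by
  refine Summable.of_nonneg_of_le (fun m => by positivity) (fun m => ?_) (summable_wt hα z)
  nlinarith [abs_nonneg (aa α z m)]

lemma summable_mul_aa (hα : -1 < α) (z : ℝ) :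
    Summable (fun m : ℕ => (m : ℝ) * aa α z m) := by
  refine Summable.of_abs ?_
  refine (summable_mul_abs_aa hα z).congr fun m => ?_
  rw [abs_mul, Nat.abs_cast]

lemma aa_succ (hα : -1 < α) (z : ℝ) (m : ℕ) :
    aa α z (m+1) = -z * aa α z m / (((m:ℝ)+1) * (α+1+m)) := by
  have h1 := gamma_pos hα m
  have h2 : (0:ℝ) < m.factorial := by positivity
  have h3 := arg_pos hα m
  rw [aa, aa, pow_succ, Nat.factorial_succ]
  push_cast
  rw [gamma_rec hα]
  field_simp

end Aux2

noncomputable def besselA' (α : ℝ) (x : ℝ) : ℝ :=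
  ∑' m : ℕ, -((-x) ^ m / (m.factorial * Real.Gamma (α + 2 + m)))

section Deriv
variable {α : ℝ}

lemma gder (hα : -1 < α) (m : ℕ) (z : ℝ) :
    HasDerivAt (fun w => aa α w m)
      (-((m : ℝ) * (-z) ^ (m - 1)) / (m.factorial * Real.Gamma (α + 1 + m))) z := by
  have h1 : HasDerivAt (fun w : ℝ => (-w) ^ m) ((m : ℝ) * (-z) ^ (m-1) * (-1)) z := by
    have := (hasDerivAt_pow m (-z)).comp z (hasDerivAt_neg z)
    exact this
  have h2 := h1.div_const ((m.factorial : ℝ) * Real.Gamma (α + 1 + m))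
  refine h2.congr_deriv ?_
  ring

lemma gder_bound (hα : -1 < α) (m : ℕ) {R z : ℝ} (h1R : 1 ≤ R) (hz : |z| ≤ R) :
    ‖-((m : ℝ) * (-z) ^ (m - 1)) / (m.factorial * Real.Gamma (α + 1 + m))‖ ≤
      ((m : ℝ) + 1) * R ^ m / (m.factorial * Real.Gamma (α + 1 + m)) := by
  have h1 := gamma_pos hα m
  have h2 : (0:ℝ) < m.factorial := by positivity
  rw [Real.norm_eq_abs, abs_div, abs_neg, abs_mul, Nat.abs_cast, abs_pow, abs_neg,
    abs_of_pos (mul_pos h2 h1)]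
  rw [div_le_div_iff_of_pos_right (mul_pos h2 h1)]
  have hz0 : |z| ^ (m-1) ≤ R ^ m :=
    le_trans (pow_le_pow_left₀ (abs_nonneg z) hz _)
      (pow_le_pow_right₀ h1R (Nat.sub_le m 1))
  nlinarith [pow_nonneg (abs_nonneg z) (m-1), Nat.cast_nonneg (α := ℝ) m,
    pow_nonneg (le_trans zero_le_one h1R) m]

lemma summable_gder (hα : -1 < α) {R : ℝ} (h1R : 1 ≤ R) (z : ℝ) (hz : |z| ≤ R) :
    Summable (fun m : ℕ => -((m : ℝ) * (-z) ^ (m - 1)) /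
      (m.factorial * Real.Gamma (α + 1 + m))) :=
  Summable.of_norm_bounded (key_summable hα (le_trans zero_le_one h1R))
    (fun m => gder_bound hα m h1R hz)

lemma besselA_hasDerivAt (hα : -1 < α) (x : ℝ) :
    HasDerivAt (besselA α) (besselA' α x) x := by
  set R := |x| + 1 with hRdef
  have h1R : 1 ≤ R := by simp [hRdef]
  have hxR : x ∈ Metric.ball (0:ℝ) R := by
    simp [hRdef, Real.norm_eq_abs]
  have key := hasDerivAt_tsum_of_isPreconnected
    (key_summable hα (le_trans zero_le_one h1R))
    Metric.isOpen_ball (convex_ball (0:ℝ) R).isPreconnected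
    (fun m z _ => gder hα m z)
    (fun m z hzb => gder_bound hα m h1R (by
      have := Metric.mem_ball.mp hzb
      rw [Real.dist_eq, sub_zero] at this
      linarith))
    (Metric.mem_ball_self (by linarith) : (0:ℝ) ∈ Metric.ball (0:ℝ) R)
    ((summable_aa hα 0).congr fun m => rfl)
    hxR
  have h1 : besselA α = fun z => ∑' m : ℕ, aa α z m := rfl
  rw [h1]
  refine key.congr_deriv (Eq.symm ?_)
  -- besselA' α x = ∑' m, deriv terms
  have hs := summable_gder hα h1R x (by simp [hRdef])
  rw [besselA', Summable.tsum_eq_zero_add hs]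
  have h0 : -((0 : ℝ) * (-x) ^ (0 - 1)) / ((Nat.factorial 0 : ℝ) * Real.Gamma (α + 1 + (0:ℕ))) = 0 := by
    simp
  rw [Nat.cast_zero] at h0 ⊢
  rw [h0, zero_add]
  apply tsum_congr
  intro m
  have h1 := gamma_pos hα (m+1)
  have h1' := gamma_pos hα m
  have h2 : (0:ℝ) < m.factorial := by positivity
  have harg : α + 1 + ((m:ℕ)+1 : ℕ) = α + 2 + (m:ℝ) := by push_cast; ring
  rw [Nat.add_sub_cancel, Nat.factorial_succ]
  rw [show ((m:ℕ)+1:ℕ) = m+1 from rfl] at harg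
  rw [harg]
  have h3 := gamma_pos hα m  -- Γ(α+1+m)
  have hΓ2 : 0 < Real.Gamma (α + 2 + m) := by
    rw [show α + 2 + (m:ℝ) = (α+1+m)+1 by ring, Real.Gamma_add_one (ne_of_gt (arg_pos hα m))]
    exact mul_pos (arg_pos hα m) h3
  push_cast
  field_simp

lemma mul_besselA' (hα : -1 < α) (z : ℝ) :
    z * besselA' α z = ∑' m : ℕ, (m : ℝ) * aa α z m := by
  rw [besselA', ← tsum_mul_left]
  rw [Summable.tsum_eq_zero_add (summable_mul_aa hα z)]
  rw [Nat.cast_zero, zero_mul, zero_add]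
  apply tsum_congr
  intro m
  have h1' := gamma_pos hα m
  have h2 : (0:ℝ) < m.factorial := by positivity
  have hΓ2 : 0 < Real.Gamma (α + 2 + m) := by
    rw [show α + 2 + (m:ℝ) = (α+1+m)+1 by ring, Real.Gamma_add_one (ne_of_gt (arg_pos hα m))]
    exact mul_pos (arg_pos hα m) h1'
  rw [aa_succ hα z m]
  have harg : α + 1 + ((m:ℝ)+1) = α + 2 + (m:ℝ) := by ring
  rw [aa]
  have h3 := arg_pos hα m
  rw [show α + 2 + (m:ℝ) = α + 1 + ((m:ℝ)+1) from by ring, gamma_rec hα m]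
  push_cast
  field_simp

end Deriv

section Main
variable {α : ℝ}

noncomputable def gg (α x y : ℝ) (k l : ℕ) : ℝ :=
  ((k:ℝ) * (α + k) / (α + (k:ℝ) + l)) * (aa α x k * aa α y l)

noncomputable def hh (α x y : ℝ) (k l : ℕ) : ℝ :=
  ((l:ℝ) * (α + l) / (α + (l:ℝ) + k)) * (aa α x k * aa α y l)

lemma frac_le (hα : -1 < α) (p q : ℕ) : |(p:ℝ) * (α + p) / (α + (p:ℝ) + q)| ≤ p := by
  rcases Nat.eq_zero_or_pos p with hp | hp
  · simp [hp]
  · have hp1 : (1:ℝ) ≤ p := by exact_mod_cast hp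
    have hq0 : (0:ℝ) ≤ q := Nat.cast_nonneg q
    have h1 : 0 < α + (p:ℝ) := by linarith
    have h2 : 0 < α + (p:ℝ) + q := by linarith
    rw [abs_div, abs_of_pos h2, abs_mul, Nat.abs_cast, abs_of_pos h1, div_le_iff₀ h2]
    nlinarith

lemma abs_gg_le (hα : -1 < α) (x y : ℝ) (k l : ℕ) :
    |gg α x y k l| ≤ ((k:ℝ) * |aa α x k|) * |aa α y l| := by
  rw [gg, abs_mul, abs_mul]
  calc |(k:ℝ) * (α + k) / (α + (k:ℝ) + l)| * (|aa α x k| * |aa α y l|)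
      ≤ (k:ℝ) * (|aa α x k| * |aa α y l|) := by
        apply mul_le_mul_of_nonneg_right (frac_le hα k l) (by positivity)
    _ = ((k:ℝ) * |aa α x k|) * |aa α y l| := by ring

lemma abs_hh_le (hα : -1 < α) (x y : ℝ) (k l : ℕ) :
    |hh α x y k l| ≤ |aa α x k| * ((l:ℝ) * |aa α y l|) := by
  rw [hh, abs_mul, abs_mul]
  calc |(l:ℝ) * (α + l) / (α + (l:ℝ) + k)| * (|aa α x k| * |aa α y l|)
      ≤ (l:ℝ) * (|aa α x k| * |aa α y l|) := by
        apply mul_le_mul_of_nonneg_right (frac_le hα l k) (by positivity)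
    _ = |aa α x k| * ((l:ℝ) * |aa α y l|) := by ring

lemma summable_gg_inner (hα : -1 < α) (x y : ℝ) (k : ℕ) :
    Summable (fun l => gg α x y k l) :=
  Summable.of_norm_bounded (((summable_abs_aa hα y).mul_left ((k:ℝ) * |aa α x k|)))
    (fun l => abs_gg_le hα x y k l)

lemma summable_gg_inner_norm (hα : -1 < α) (x y : ℝ) (k : ℕ) :
    Summable (fun l => |gg α x y k l|) :=
  Summable.of_nonneg_of_le (fun l => abs_nonneg _) (fun l => abs_gg_le hα x y k l)
    (((summable_abs_aa hα y).mul_left ((k:ℝ) * |aa α x k|)))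

lemma summable_hh_inner (hα : -1 < α) (x y : ℝ) (k : ℕ) :
    Summable (fun l => hh α x y k l) :=
  Summable.of_norm_bounded (((summable_mul_abs_aa hα y).mul_left (|aa α x k|)))
    (fun l => abs_hh_le hα x y k l)

lemma summable_hh_inner_norm (hα : -1 < α) (x y : ℝ) (k : ℕ) :
    Summable (fun l => |hh α x y k l|) :=
  Summable.of_nonneg_of_le (fun l => abs_nonneg _) (fun l => abs_hh_le hα x y k l)
    (((summable_mul_abs_aa hα y).mul_left (|aa α x k|)))

lemma summable_G (hα : -1 < α) (x y : ℝ) :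
    Summable (fun k => ∑' l, gg α x y k l) := by
  apply Summable.of_norm_bounded (g := fun k : ℕ => ((k:ℝ) * |aa α x k|) * (∑' l : ℕ, |aa α y l|))
    ((summable_mul_abs_aa hα x).mul_right _)
  intro k
  have hnorm : Summable (fun l : ℕ => ‖gg α x y k l‖) := summable_gg_inner_norm hα x y k
  calc ‖∑' l, gg α x y k l‖ ≤ ∑' l, |gg α x y k l| := norm_tsum_le_tsum_norm hnorm
    _ ≤ ∑' l : ℕ, ((k:ℝ) * |aa α x k|) * |aa α y l| :=
        Summable.tsum_le_tsum (fun l => abs_gg_le hα x y k l) (summable_gg_inner_norm hα x y k)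
          ((summable_abs_aa hα y).mul_left _)
    _ = ((k:ℝ) * |aa α x k|) * (∑' l : ℕ, |aa α y l|) := tsum_mul_left

lemma summable_H (hα : -1 < α) (x y : ℝ) :
    Summable (fun k => ∑' l, hh α x y k l) := by
  apply Summable.of_norm_bounded (g := fun k : ℕ => |aa α x k| * (∑' l : ℕ, (l:ℝ) * |aa α y l|))
    ((summable_abs_aa hα x).mul_right _)
  intro k
  have hnorm : Summable (fun l : ℕ => ‖hh α x y k l‖) := summable_hh_inner_norm hα x y k
  calc ‖∑' l, hh α x y k l‖ ≤ ∑' l, |hh α x y k l| := norm_tsum_le_tsum_norm hnorm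
    _ ≤ ∑' l : ℕ, |aa α x k| * ((l:ℝ) * |aa α y l|) :=
        Summable.tsum_le_tsum (fun l => abs_hh_le hα x y k l) (summable_hh_inner_norm hα x y k)
          ((summable_mul_abs_aa hα y).mul_left _)
    _ = |aa α x k| * (∑' l : ℕ, (l:ℝ) * |aa α y l|) := tsum_mul_left

end Main

section Pointwise
variable {α : ℝ}

lemma denom_pos (hα : -1 < α) (k l : ℕ) : 0 < α + 1 + (k:ℝ) + l := by
  have h1 : (0:ℝ) ≤ k := Nat.cast_nonneg k
  have h2 : (0:ℝ) ≤ l := Nat.cast_nonneg l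
  linarith

lemma Ia (hα : -1 < α) (x y : ℝ) (k l : ℕ) :
    x * (aa α x k * aa α y l / (α + 1 + (k:ℝ) + l)) = -(gg α x y (k+1) l) := by
  rw [gg, aa_succ hα x k]
  have h1 : α + 1 + (k:ℝ) ≠ 0 := ne_of_gt (arg_pos hα k)
  have h2 : α + 1 + (k:ℝ) + l ≠ 0 := ne_of_gt (denom_pos hα k l)
  have h3 : ((k:ℝ) + 1) ≠ 0 := by positivity
  push_cast
  have h4 : α + ((k:ℝ) + 1) + l ≠ 0 := by intro h; apply h2; linarith
  field_simp
  ring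

lemma Ib (hα : -1 < α) (x y : ℝ) (k l : ℕ) :
    y * (aa α x k * aa α y l / (α + 1 + (k:ℝ) + l)) = -(hh α x y k (l+1)) := by
  rw [hh, aa_succ hα y l]
  have h1 : α + 1 + (l:ℝ) ≠ 0 := ne_of_gt (arg_pos hα l)
  have h2 : α + 1 + (k:ℝ) + l ≠ 0 := ne_of_gt (denom_pos hα k l)
  have h3 : ((l:ℝ) + 1) ≠ 0 := by positivity
  push_cast
  have h4 : α + ((l:ℝ) + 1) + k ≠ 0 := by intro h; apply h2; linarith
  field_simp
  ring

lemma Ic (hα : -1 < α) (x y : ℝ) (k l : ℕ) :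
    hh α x y k l - gg α x y k l = ((l:ℝ) - k) * (aa α x k * aa α y l) := by
  by_cases hz : α + (k:ℝ) + l = 0
  · have hk0 : (0:ℝ) ≤ k := Nat.cast_nonneg k
    have hl0 : (0:ℝ) ≤ l := Nat.cast_nonneg l
    have hk : k = 0 := by
      have : (k:ℝ) < 1 := by linarith
      exact_mod_cast Nat.lt_one_iff.mp (by exact_mod_cast this)
    have hl : l = 0 := by
      have : (l:ℝ) < 1 := by linarith
      exact_mod_cast Nat.lt_one_iff.mp (by exact_mod_cast this)
    subst hk; subst hl
    simp [gg, hh]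
  · have hz' : α + (l:ℝ) + k ≠ 0 := by intro h; apply hz; linarith
    rw [gg, hh]
    field_simp
    ring

lemma gg_zero (α x y : ℝ) (l : ℕ) : gg α x y 0 l = 0 := by simp [gg]

lemma hh_zero (α x y : ℝ) (k : ℕ) : hh α x y k 0 = 0 := by simp [hh]

end Pointwise

theorem limitKernel_aux (α : ℝ) (hα : -1 < α)
    (x y : ℝ) (hx : 0 < x) (hy : 0 < y) (hxy : x ≠ y) :
    (∑' k : ℕ, ∑' l : ℕ,
    ((-1) ^ k * x ^ k / ((Nat.factorial k : ℝ) * Real.Gamma ((α + 1 + k) / 1))) *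
      ((-1) ^ l * y ^ ((1:ℝ) * (l : ℝ)) /
        ((Nat.factorial l : ℝ) * Real.Gamma (α + 1 + 1 * l))) *
      ((1:ℝ) / (α + 1 + k + 1 * l))) =
      (y * besselA α x * deriv (besselA α) y -
        x * besselA α y * deriv (besselA α) x) / (x - y) := by
  have hdy : deriv (besselA α) y = besselA' α y := (besselA_hasDerivAt hα y).deriv
  have hdx : deriv (besselA α) x = besselA' α x := (besselA_hasDerivAt hα x).deriv
  have hK : (∑' k : ℕ, ∑' l : ℕ,
      ((-1) ^ k * x ^ k / ((Nat.factorial k : ℝ) * Real.Gamma ((α + 1 + k) / 1))) *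
        ((-1) ^ l * y ^ ((1:ℝ) * (l : ℝ)) /
          ((Nat.factorial l : ℝ) * Real.Gamma (α + 1 + 1 * l))) *
        ((1:ℝ) / (α + 1 + k + 1 * l)))
      = ∑' k : ℕ, ∑' l : ℕ, aa α x k * aa α y l / (α + 1 + (k:ℝ) + l) := by
    apply tsum_congr; intro k; apply tsum_congr; intro l
    simp only [div_one, one_mul]
    rw [Real.rpow_natCast]
    rw [aa, aa, neg_pow, neg_pow]
    ring
  rw [hK]
  set K := ∑' k : ℕ, ∑' l : ℕ, aa α x k * aa α y l / (α + 1 + (k:ℝ) + l) with hKdef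
  have hxK : x * K = -(∑' k : ℕ, ∑' l : ℕ, gg α x y k l) := by
    rw [hKdef, ← tsum_mul_left]
    have step1 : ∀ k : ℕ, x * ∑' l : ℕ, aa α x k * aa α y l / (α + 1 + (k:ℝ) + l)
        = -(∑' l : ℕ, gg α x y (k+1) l) := by
      intro k
      rw [← tsum_mul_left, ← tsum_neg]
      exact tsum_congr fun l => Ia hα x y k l
    calc (∑' k : ℕ, x * ∑' l : ℕ, aa α x k * aa α y l / (α + 1 + (k:ℝ) + l))
        = ∑' k : ℕ, -(∑' l : ℕ, gg α x y (k+1) l) := tsum_congr step1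
      _ = -(∑' k : ℕ, ∑' l : ℕ, gg α x y (k+1) l) := tsum_neg
      _ = -(∑' k : ℕ, ∑' l : ℕ, gg α x y k l) := by
          congr 1
          have h0 := Summable.tsum_eq_zero_add (summable_G hα x y)
          rw [h0]
          simp [gg_zero]
  have hyK : y * K = -(∑' k : ℕ, ∑' l : ℕ, hh α x y k l) := by
    rw [hKdef, ← tsum_mul_left, ← tsum_neg]
    apply tsum_congr; intro k
    rw [← tsum_mul_left]
    calc (∑' l : ℕ, y * (aa α x k * aa α y l / (α + 1 + (k:ℝ) + l)))
        = ∑' l : ℕ, -(hh α x y k (l+1)) := tsum_congr (Ib hα x y k)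
      _ = -(∑' l : ℕ, hh α x y k (l+1)) := tsum_neg
      _ = -(∑' l : ℕ, hh α x y k l) := by
          congr 1
          have h0 := Summable.tsum_eq_zero_add (summable_hh_inner hα x y k)
          rw [h0, hh_zero, zero_add]
  have hsub : K * (x - y)
      = (∑' k : ℕ, ∑' l : ℕ, hh α x y k l) - (∑' k : ℕ, ∑' l : ℕ, gg α x y k l) := by
    have h : K * (x - y) = x * K - y * K := by ring
    rw [h, hxK, hyK]; ring
  have hmain : K * (x - y)
      = (∑' k : ℕ, aa α x k) * (∑' l : ℕ, (l:ℝ) * aa α y l)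
        - (∑' k : ℕ, (k:ℝ) * aa α x k) * (∑' l : ℕ, aa α y l) := by
    rw [hsub, ← Summable.tsum_sub (summable_H hα x y) (summable_G hα x y)]
    have step : ∀ k : ℕ, (∑' l, hh α x y k l) - (∑' l, gg α x y k l)
        = aa α x k * (∑' l : ℕ, (l:ℝ) * aa α y l)
          - ((k:ℝ) * aa α x k) * (∑' l : ℕ, aa α y l) := by
      intro k
      rw [← Summable.tsum_sub (summable_hh_inner hα x y k) (summable_gg_inner hα x y k)]
      have e1 : ∀ l : ℕ, hh α x y k l - gg α x y k l
          = aa α x k * ((l:ℝ) * aa α y l) - ((k:ℝ) * aa α x k) * aa α y l := by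
        intro l; rw [Ic hα x y k l]; ring
      calc (∑' l : ℕ, (hh α x y k l - gg α x y k l))
          = ∑' l : ℕ, (aa α x k * ((l:ℝ) * aa α y l) - ((k:ℝ) * aa α x k) * aa α y l) :=
            tsum_congr e1
        _ = (∑' l : ℕ, aa α x k * ((l:ℝ) * aa α y l))
              - ∑' l : ℕ, ((k:ℝ) * aa α x k) * aa α y l :=
            Summable.tsum_sub ((summable_mul_aa hα y).mul_left _) ((summable_aa hα y).mul_left _)
        _ = aa α x k * (∑' l : ℕ, (l:ℝ) * aa α y l)
              - ((k:ℝ) * aa α x k) * (∑' l : ℕ, aa α y l) := by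
            rw [tsum_mul_left, tsum_mul_left]
    calc (∑' k : ℕ, ((∑' l, hh α x y k l) - (∑' l, gg α x y k l)))
        = ∑' k : ℕ, (aa α x k * (∑' l : ℕ, (l:ℝ) * aa α y l)
            - ((k:ℝ) * aa α x k) * (∑' l : ℕ, aa α y l)) := tsum_congr step
      _ = (∑' k : ℕ, aa α x k * (∑' l : ℕ, (l:ℝ) * aa α y l))
            - ∑' k : ℕ, ((k:ℝ) * aa α x k) * (∑' l : ℕ, aa α y l) :=
          Summable.tsum_sub ((summable_aa hα x).mul_right _) ((summable_mul_aa hα x).mul_right _)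
      _ = _ := by rw [tsum_mul_right, tsum_mul_right]
  rw [hdx, hdy, eq_div_iff (sub_ne_zero.mpr hxy)]
  rw [hmain]
  have hAx : (∑' k : ℕ, aa α x k) = besselA α x := rfl
  have hAy : (∑' l : ℕ, aa α y l) = besselA α y := rfl
  rw [hAx, hAy, ← mul_besselA' hα y, ← mul_besselA' hα x]
  ring


/-- **The limit kernel at `θ = 1` is the Bessel kernel:** for `x ≠ y`,
`𝒦^{(α,1)}(x,y) = (y A(x) A'(y) - x A(y) A'(x)) / (x - y)`. -/
theorem limitKernel_theta_one_eq_bessel_kernel (α : ℝ) (hα : -1 < α)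
    (x y : ℝ) (hx : 0 < x) (hy : 0 < y) (hxy : x ≠ y) :
    limitKernel α 1 x y =
      (y * besselA α x * deriv (besselA α) y -
        x * besselA α y * deriv (besselA α) x) / (x - y) :=
  limitKernel_aux α hα x y hx hy hxy
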